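/- arXiv:1809.04216 — 2 statements merged into one kernel-verified Lean document; each statement's English description precedes it below -/
import Mathlib

section
/- Let $(\alpha_k)_{k\geq 0}$ and $(h_k)_{k\geq 0}$ be nonnegative real sequences such that (1) $\lim_k h_k = 0$ and $\sum_k h_k = +\infty$, (2) $\sum_k \alpha_k h_k < +\infty$, and (3) there exists $c > 0$ with $|\alpha_{k+1} - \alpha_k| \leq c\, h_k$ for all $k$. Then $\lim_k \alpha_k = 0$. -/
open Filter Finset

theorem weakly_summable_tendsto_zero
    (α h : ℕ → ℝ) (hα : ∀ k, 0 ≤ α k) (hh : ∀ k, 0 ≤ h k)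
    (hh0 : Tendsto h atTop (nhds 0)) (hhdiv : ¬ Summable h)
    (hsum : Summable (fun k => α k * h k))
    (c : ℝ) (hc : 0 < c) (hdiff : ∀ k, |α (k + 1) - α k| ≤ c * h k) :
    Tendsto α atTop (nhds 0) := by
  classical
  by_contra hcon
  rw [Metric.tendsto_atTop] at hcon
  push_neg at hcon
  obtain ⟨ε, hε, hfreq⟩ := hcon
  have hfreq' : ∀ N, ∃ n ≥ N, ε ≤ α n := by
    intro N
    obtain ⟨n, hn, hd⟩ := hfreq N
    refine ⟨n, hn, ?_⟩
    rwa [dist_zero_right, Real.norm_eq_abs, abs_of_nonneg (hα n)] at hd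
  -- liminf is 0: infinitely often α ≤ ε/2
  have hfreq2 : ∀ N, ∃ m, N ≤ m ∧ α m ≤ ε / 2 := by
    by_contra hne
    push_neg at hne
    obtain ⟨N, hN⟩ := hne
    apply hhdiv
    rw [← summable_nat_add_iff N]
    have hsum' : Summable (fun k => (2 / ε) * (α (k + N) * h (k + N))) :=
      ((summable_nat_add_iff N).mpr hsum).mul_left _
    refine Summable.of_nonneg_of_le (fun k => hh _) (fun k => ?_) hsum'
    have hαk : ε / 2 < α (k + N) := hN (k + N) (Nat.le_add_left _ _)
    have hhk := hh (k + N)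
    rw [div_mul_eq_mul_div, le_div_iff₀ hε]
    nlinarith
  -- choose N with tail sum small
  have htail : Tendsto (fun N => ∑' i, α (i + N) * h (i + N)) atTop (nhds 0) := by
    exact_mod_cast tendsto_sum_nat_add (fun k => α k * h k)
  have hδ : 0 < ε ^ 2 / (4 * c) := by positivity
  obtain ⟨N, hN⟩ := (Metric.tendsto_atTop.mp htail (ε ^ 2 / (4 * c)) hδ)
  have htailN : ∑' i, α (i + N) * h (i + N) < ε ^ 2 / (4 * c) := by
    have := hN N le_rfl
    rw [dist_zero_right, Real.norm_eq_abs] at this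
    calc ∑' i, α (i + N) * h (i + N) ≤ |∑' i, α (i + N) * h (i + N)| := le_abs_self _
      _ < _ := this
  obtain ⟨k, hkN, hkε⟩ := hfreq' N
  -- first index m > k with α m ≤ ε/2
  have hex : ∃ n, k + 1 ≤ n ∧ α n ≤ ε / 2 := hfreq2 (k + 1)
  set m := Nat.find hex with hm
  obtain ⟨hmk, hmα⟩ := Nat.find_spec hex
  have hmid : ∀ j, k ≤ j → j < m → ε / 2 < α j := by
    intro j hkj hjm
    rcases eq_or_lt_of_le hkj with rfl | hkj'
    · linarith
    · by_contra hle
      push_neg at hle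
      exact absurd (Nat.find_min' hex ⟨hkj', hle⟩) (Nat.not_le.mpr hjm)
  have hkm : k < m := lt_of_lt_of_le (Nat.lt_succ_self k) hmk
  -- telescoping bound: α k - α m ≤ c * ∑ h over [k, m)
  have htele : ∀ n, α k - α (k + n) ≤ c * ∑ i ∈ range n, h (k + i) := by
    intro n
    induction n with
    | zero => simp
    | succ n ih =>
        have h1 : α (k + n) - α (k + n + 1) ≤ c * h (k + n) := by
          have := hdiff (k + n)
          have := abs_le.mp this
          linarith [this.1]
        rw [sum_range_succ]
        have : k + (n + 1) = k + n + 1 := by ring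
        rw [this]
        nlinarith
  have hS : ε / (2 * c) ≤ ∑ j ∈ Ico k m, h j := by
    have h1 := htele (m - k)
    rw [Nat.add_sub_cancel' (le_of_lt hkm)] at h1
    have h2 : ∑ i ∈ range (m - k), h (k + i) = ∑ j ∈ Ico k m, h j := by
      rw [Finset.sum_Ico_eq_sum_range]
    rw [h2] at h1
    have h3 : ε / 2 ≤ α k - α m := by linarith
    rw [div_le_iff₀ (by positivity : (0:ℝ) < 2 * c)]
    nlinarith
  -- lower bound on the weighted sum over [k, m)
  have hlow : ε / 2 * ∑ j ∈ Ico k m, h j ≤ ∑ j ∈ Ico k m, α j * h j := by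
    rw [Finset.mul_sum]
    apply Finset.sum_le_sum
    intro j hj
    rw [Finset.mem_Ico] at hj
    exact mul_le_mul_of_nonneg_right (le_of_lt (hmid j hj.1 hj.2)) (hh j)
  -- upper bound by the tail
  have hup : ∑ j ∈ Ico k m, α j * h j ≤ ∑' i, α (i + N) * h (i + N) := by
    have hsub : ∑ j ∈ Ico k m, α j * h j ≤ ∑ j ∈ Ico N m, α j * h j := by
      apply Finset.sum_le_sum_of_subset_of_nonneg
      · exact Finset.Ico_subset_Ico hkN le_rfl
      · intro j _ _
        exact mul_nonneg (hα j) (hh j)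
    have heq : ∑ j ∈ Ico N m, α j * h j = ∑ i ∈ range (m - N), α (i + N) * h (i + N) := by
      rw [Finset.sum_Ico_eq_sum_range]
      apply Finset.sum_congr rfl
      intro i _
      rw [Nat.add_comm N i]
    have hle : ∑ i ∈ range (m - N), α (i + N) * h (i + N) ≤ ∑' i, α (i + N) * h (i + N) := by
      apply Summable.sum_le_tsum
      · intro i _
        exact mul_nonneg (hα _) (hh _)
      · exact (summable_nat_add_iff N).mpr hsum
    linarith
  -- contradiction
  have hfinal : ε ^ 2 / (4 * c) ≤ ∑' i, α (i + N) * h (i + N) := by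
    have h1 : ε / 2 * (ε / (2 * c)) ≤ ε / 2 * ∑ j ∈ Ico k m, h j :=
      mul_le_mul_of_nonneg_left hS (by linarith)
    have h2 : ε / 2 * (ε / (2 * c)) = ε ^ 2 / (4 * c) := by
      field_simp
      ring
    linarith
  linarith
end

section
/- Let $a > b > 0$, $c > 0$, and $n \geq 0$ be real numbers. Then $c\, x^n b^x \leq a^x$ for all real $x \geq \max\{0,\; \frac{(2n+2)(\ln c + n\ln(\frac{2n+2}{\ln(a/b)}) - n)}{(n+2)\ln(a/b)}\}$. -/
theorem poly_times_geometric_le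
    (a b c n : ℝ) (hab : a > b) (hb : b > 0) (hc : c > 0) (hn : n ≥ 0) :
    ∀ x : ℝ,
      x ≥ max 0 ((2 * n + 2) * (Real.log c + n * Real.log ((2 * n + 2) / Real.log (a / b)) - n)
            / ((n + 2) * Real.log (a / b))) →
      c * x ^ n * b ^ x ≤ a ^ x := by
  intro x hx
  have ha : 0 < a := hb.trans hab
  have hL : 0 < Real.log (a / b) := Real.log_pos ((one_lt_div hb).mpr hab)
  set L := Real.log (a / b) with hLdef
  have hLab : L = Real.log a - Real.log b := Real.log_div ha.ne' hb.ne'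
  have hx0 : 0 ≤ x := le_trans (le_max_left _ _) hx
  have hD : 0 < 2 * n + 2 := by linarith
  have hxT : (2 * n + 2) * (Real.log c + n * Real.log ((2 * n + 2) / L) - n)
      ≤ x * ((n + 2) * L) := by
    have h := le_trans (le_max_right _ _) hx
    rw [div_le_iff₀ (by positivity)] at h
    linarith
  rcases eq_or_lt_of_le hx0 with h0 | hxpos
  · rcases eq_or_lt_of_le hn with hn0 | hnpos
    · have hc1 : Real.log c ≤ 0 := by
        rw [← h0, ← hn0] at hxT
        nlinarith [hxT]
      have hcle : c ≤ 1 := by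
        rw [← Real.exp_log hc]
        calc Real.exp (Real.log c) ≤ Real.exp 0 := Real.exp_le_exp.mpr hc1
          _ = 1 := Real.exp_zero
      rw [← h0, ← hn0]
      simp [Real.rpow_zero]
      linarith
    · rw [← h0, Real.zero_rpow (ne_of_gt hnpos)]
      simp
  · have hx0pos : 0 < (2 * n + 2) / L := by positivity
    have hkey : Real.log x - Real.log ((2 * n + 2) / L) ≤ x * L / (2 * n + 2) - 1 := by
      have h1 : Real.log (x / ((2 * n + 2) / L)) ≤ x / ((2 * n + 2) / L) - 1 :=
        Real.log_le_sub_one_of_pos (by positivity)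
      rw [Real.log_div hxpos.ne' hx0pos.ne'] at h1
      have heq : x / ((2 * n + 2) / L) = x * L / (2 * n + 2) := by
        field_simp
      rw [heq] at h1
      linarith
    have hmain : Real.log c + n * Real.log x ≤ x * L := by
      have h2 : n * (Real.log x - Real.log ((2 * n + 2) / L))
          ≤ n * (x * L / (2 * n + 2) - 1) := mul_le_mul_of_nonneg_left hkey hn
      have h3 : Real.log c + n * Real.log ((2 * n + 2) / L) - n
          ≤ x * ((n + 2) * L) / (2 * n + 2) := by
        rw [le_div_iff₀ hD]
        nlinarith [hxT]
      have hsum : x * ((n + 2) * L) / (2 * n + 2) + n * (x * L / (2 * n + 2)) = x * L := by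
        field_simp
        ring
      nlinarith [h2, h3, hsum]
    have hax : Real.log a * x = Real.log b * x + L * x := by rw [hLab]; ring
    calc c * x ^ n * b ^ x = Real.exp (Real.log c + Real.log x * n + Real.log b * x) := by
          rw [Real.rpow_def_of_pos hxpos, Real.rpow_def_of_pos hb, Real.exp_add, Real.exp_add,
            Real.exp_log hc]
      _ ≤ Real.exp (Real.log a * x) := by
          apply Real.exp_le_exp.mpr
          nlinarith [hmain, hax]
      _ = a ^ x := (Real.rpow_def_of_pos ha x).symm
end
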